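/- Let m ≥ 1 and n ≥ 2m be integers, let l ≥ 3, and let X = X(k_0; k_1,…,k_l) with k_1 ≥ 1 and k_l ≥ 1. Define k_1' = k_1 − 1, k_l' = k_l − 1, and: if l > 3, k_2' = k_2 + 1, k_{l−1}' = k_{l−1} + 1, and k_j' = k_j for 3 ≤ j ≤ l−2; if l = 3, k_2' = k_2 + 2. Then the nonnegative integers k_1',…,k_l' again satisfy Σ_{j=1}^l k_j' = n and Σ_{j=1}^l j·k_j' = 2n − k_0 − m, and for X' = X(k_0; k_1',…,k_l') the difference M_X − M_{X'} is a positive even integer; in particular M_X > M_{X'}, and if M_X is an even integer then so is M_{X'}. -/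

import Mathlib

noncomputable section

/-- The set of distances between distinct points of `S`. -/
def distSet {n : ℕ} (S : Set (EuclideanSpace ℝ (Fin n))) : Set ℝ :=
  {d | ∃ x ∈ S, ∃ y ∈ S, x ≠ y ∧ d = dist x y}

/-- `S` is an `s`-distance set: exactly `s` distances occur between distinct points. -/
def IsSDistanceSet {n : ℕ} (s : ℕ) (S : Set (EuclideanSpace ℝ (Fin n))) : Prop :=
  (distSet S).Finite ∧ (distSet S).ncard = s

/-- The representation `J̃(n,m)` of the Johnson graph `J(n,m)`. -/
def JohnsonRep (n m : ℕ) : Set (EuclideanSpace ℝ (Fin n)) :=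
  {x | (∀ i, x i = 0 ∨ x i = 1) ∧ {i : Fin n | x i = 1}.ncard = m}

/-- The hyperplane `H(n,m) = {x : ∑ x_i = m}`. -/
def Hyp (n m : ℕ) : Set (EuclideanSpace ℝ (Fin n)) :=
  {x | ∑ i, x i = (m : ℝ)}

/-- The set `X(k₀; k₁, …, k_l)`: vectors having, for each `1 ≤ j ≤ l`, exactly `k j`
coordinates equal to `(2 - j) - k₀/n`. -/
def XSet (n l : ℕ) (k0 : ℤ) (k : ℕ → ℕ) : Set (EuclideanSpace ℝ (Fin n)) :=
  {y | ∀ j ∈ Finset.Icc 1 l, {i : Fin n | y i = (2 - (j : ℝ)) - (k0 : ℝ) / n}.ncard = k j}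

open Finset

lemma swap_sum (l : ℕ) (a : ℕ → ℕ) :
    ∑ j ∈ Icc 1 l, (j - 1) * a j = ∑ t ∈ Icc 2 l, ∑ j ∈ Icc t l, a j := by
  have h1 : ∀ j ∈ Icc 1 l, (j - 1) * a j = ∑ t ∈ Icc 2 j, a j := by
    intro j hj
    rw [Finset.sum_const, Nat.card_Icc, smul_eq_mul]
    congr 1
  rw [Finset.sum_congr rfl h1]
  exact Finset.sum_comm' (by intro x y; simp only [mem_Icc]; omega)

lemma Asucc (k : ℕ → ℕ) (l t : ℕ) (ht : t ≤ l) :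
    ∑ j ∈ Icc t l, k j = k t + ∑ j ∈ Icc (t+1) l, k j := by
  rw [Finset.Icc_add_one_left_eq_Ioc, Finset.Icc_eq_cons_Ioc ht, Finset.sum_cons]

lemma telescope (m l : ℕ) (k : ℕ → ℕ) :
    ∀ d t, t + d = l + 1 →
      ∑ j ∈ Icc t l, (min m (∑ i ∈ Icc j l, k i) - min m (∑ i ∈ Icc (j+1) l, k i))
        = min m (∑ i ∈ Icc t l, k i) := by
  intro d
  induction d with
  | zero =>
    intro t ht
    have : Icc t l = ∅ := Finset.Icc_eq_empty (by omega)
    simp [this]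
  | succ d ih =>
    intro t ht
    have htl : t ≤ l := by omega
    have hIoc : Ioc t l = Icc (t+1) l := by rw [Finset.Icc_add_one_left_eq_Ioc]
    conv_lhs => rw [Finset.Icc_eq_cons_Ioc htl]
    rw [Finset.sum_cons, hIoc, ih (t+1) (by omega)]
    have h1 := Asucc k l t htl
    omega

lemma bound_gen (l m : ℕ) (k a : ℕ → ℕ) (ha : ∀ j ∈ Icc 1 l, a j ≤ k j)
    (hma : ∑ j ∈ Icc 1 l, a j = m) :
    ∑ j ∈ Icc 1 l, (j - 1) * a j ≤ ∑ t ∈ Icc 2 l, min m (∑ j ∈ Icc t l, k j) := by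
  rw [swap_sum]
  apply Finset.sum_le_sum
  intro t ht
  simp only [mem_Icc] at ht
  apply le_min
  · calc ∑ j ∈ Icc t l, a j ≤ ∑ j ∈ Icc 1 l, a j :=
          Finset.sum_le_sum_of_subset (Finset.Icc_subset_Icc (by omega) le_rfl)
    _ = m := hma
  · exact Finset.sum_le_sum fun j hj => ha j (Finset.Icc_subset_Icc (by omega) le_rfl hj)

lemma eq_B (l m : ℕ) (k : ℕ → ℕ) :
    ∑ j ∈ Icc 1 l, (j - 1) * (min m (∑ i ∈ Icc j l, k i) - min m (∑ i ∈ Icc (j+1) l, k i))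
      = ∑ t ∈ Icc 2 l, min m (∑ j ∈ Icc t l, k j) := by
  rw [swap_sum]
  apply Finset.sum_congr rfl
  intro t ht
  simp only [mem_Icc] at ht
  exact telescope m l k (l + 1 - t) t (by omega)

def cc (n : ℕ) (k0 : ℤ) (j : ℕ) : ℝ := (2 - (j : ℝ)) - (k0 : ℝ) / n

def Cls (n : ℕ) (k0 : ℤ) (y : EuclideanSpace ℝ (Fin n)) (j : ℕ) : Finset (Fin n) :=
  Finset.univ.filter fun i => y i = cc n k0 j

def Ones (n : ℕ) (x : EuclideanSpace ℝ (Fin n)) : Finset (Fin n) :=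
  Finset.univ.filter fun i => x i = 1

lemma cls_card {n l : ℕ} {k0 : ℤ} {k : ℕ → ℕ} {y : EuclideanSpace ℝ (Fin n)}
    (hy : y ∈ XSet n l k0 k) : ∀ j ∈ Icc 1 l, (Cls n k0 y j).card = k j := by
  intro j hj
  have := hy j hj
  rw [show Set.ofPred (fun i : Fin n => y i = (2 - (j : ℝ)) - (k0 : ℝ) / n) = ↑(Cls n k0 y j) by
    ext i; rw [Finset.mem_coe, Cls, Finset.mem_filter]; simp [cc]] at this
  rwa [Set.ncard_coe_finset] at this

lemma cls_disj {n : ℕ} {k0 : ℤ} {y : EuclideanSpace ℝ (Fin n)} {j j' : ℕ} (h : j ≠ j') :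
    Disjoint (Cls n k0 y j) (Cls n k0 y j') := by
  rw [Finset.disjoint_left]
  intro i hi hi'
  simp only [Cls, mem_filter] at hi hi'
  have : (j : ℝ) = (j' : ℝ) := by
    have := hi.2.symm.trans hi'.2
    unfold cc at this
    linarith
  exact h (Nat.cast_injective this)

lemma ones_card {n m : ℕ} {x : EuclideanSpace ℝ (Fin n)} (hx : x ∈ JohnsonRep n m) :
    (Ones n x).card = m := by
  have := hx.2
  rw [show Set.ofPred (fun i : Fin n => x i = 1) = ↑(Ones n x) by ext i; simp [Ones]] at this
  rwa [Set.ncard_coe_finset] at this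

lemma cls_cover {n l : ℕ} {k0 : ℤ} {k : ℕ → ℕ} {y : EuclideanSpace ℝ (Fin n)}
    (hsum : (∑ j ∈ Icc 1 l, k j) = n) (hy : y ∈ XSet n l k0 k) :
    (Icc 1 l).biUnion (Cls n k0 y) = Finset.univ := by
  apply Finset.eq_univ_of_card
  rw [Finset.card_biUnion (fun j _ j' _ h => cls_disj h)]
  rw [Finset.sum_congr rfl (cls_card hy), hsum, Fintype.card_fin]

lemma decomp {n l : ℕ} {k0 : ℤ} {k : ℕ → ℕ} {y : EuclideanSpace ℝ (Fin n)}
    (hsum : (∑ j ∈ Icc 1 l, k j) = n) (hy : y ∈ XSet n l k0 k) (F : Finset (Fin n)) :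
    F = (Icc 1 l).biUnion (fun j => F ∩ Cls n k0 y j) := by
  ext i
  simp only [Finset.mem_biUnion, Finset.mem_inter]
  constructor
  · intro hi
    have : i ∈ (Icc 1 l).biUnion (Cls n k0 y) := by
      rw [cls_cover hsum hy]; exact Finset.mem_univ i
    obtain ⟨j, hj, hij⟩ := Finset.mem_biUnion.1 this
    exact ⟨j, hj, hi, hij⟩
  · rintro ⟨j, _, hi, _⟩; exact hi

lemma inter_disj {n : ℕ} {k0 : ℤ} {y : EuclideanSpace ℝ (Fin n)} (F : Finset (Fin n))
    {j j' : ℕ} (h : j ≠ j') :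
    Disjoint (F ∩ Cls n k0 y j) (F ∩ Cls n k0 y j') :=
  Disjoint.mono Finset.inter_subset_right Finset.inter_subset_right (cls_disj h)

lemma inter_card_sum {n m l : ℕ} {k0 : ℤ} {k : ℕ → ℕ}
    (hsum : (∑ j ∈ Icc 1 l, k j) = n)
    {x y : EuclideanSpace ℝ (Fin n)} (hx : x ∈ JohnsonRep n m) (hy : y ∈ XSet n l k0 k) :
    ∑ j ∈ Icc 1 l, ((Ones n x) ∩ Cls n k0 y j).card = m := by
  rw [← Finset.card_biUnion (fun j _ j' _ h => inter_disj _ h),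
    ← decomp hsum hy (Ones n x), ones_card hx]

lemma dist_sq_eq {n m l : ℕ} {k0 : ℤ} {k : ℕ → ℕ}
    (hsum : (∑ j ∈ Icc 1 l, k j) = n)
    {x y : EuclideanSpace ℝ (Fin n)} (hx : x ∈ JohnsonRep n m) (hy : y ∈ XSet n l k0 k) :
    dist x y ^ 2 = m + (∑ j ∈ Icc 1 l, (k j : ℝ) * cc n k0 j ^ 2)
      - 2 * cc n k0 1 * m
      + 2 * ((∑ j ∈ Icc 1 l, (j - 1) * ((Ones n x) ∩ Cls n k0 y j).card : ℕ) : ℝ) := by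
  have hxval : ∀ i, i ∈ Ones n x → x i = 1 := by intro i hi; simpa [Ones] using hi
  have hxval' : ∀ i, i ∉ Ones n x → x i = 0 := by
    intro i hi
    rcases hx.1 i with h | h
    · exact h
    · exact absurd (by simpa [Ones] using h) hi
  have hd : dist x y ^ 2 = ∑ i, (x i - y i) ^ 2 := by
    rw [EuclideanSpace.dist_eq, Real.sq_sqrt (by positivity)]
    simp [Real.dist_eq, sq_abs]
  have hsplit : ∑ i, (x i - y i) ^ 2
      = (∑ i, x i ^ 2) - 2 * (∑ i, x i * y i) + ∑ i, y i ^ 2 := by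
    rw [Finset.mul_sum, ← Finset.sum_sub_distrib, ← Finset.sum_add_distrib]
    exact Finset.sum_congr rfl fun i _ => by ring
  -- ∑ x_i^2 = m
  have hx2 : (∑ i, x i ^ 2) = (m : ℝ) := by
    have : ∀ i ∈ Finset.univ, x i ^ 2 = if i ∈ Ones n x then (1:ℝ) else 0 := by
      intro i _
      by_cases h : i ∈ Ones n x
      · simp [hxval i h, h]
      · simp [hxval' i h, h]
    rw [Finset.sum_congr rfl this, Finset.sum_ite_mem, Finset.univ_inter,
      Finset.sum_const, ones_card hx, nsmul_eq_mul, mul_one]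
  -- ∑ x_i y_i
  have hxy : (∑ i, x i * y i)
      = ∑ j ∈ Icc 1 l, (((Ones n x) ∩ Cls n k0 y j).card : ℝ) * cc n k0 j := by
    have h1 : ∀ i ∈ Finset.univ, x i * y i = if i ∈ Ones n x then y i else 0 := by
      intro i _
      by_cases h : i ∈ Ones n x
      · simp [hxval i h, h]
      · simp [hxval' i h, h]
    rw [Finset.sum_congr rfl h1, Finset.sum_ite_mem, Finset.univ_inter]
    conv_lhs => rw [decomp hsum hy (Ones n x)]
    rw [Finset.sum_biUnion (fun j hj j' hj' h => inter_disj _ h)]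
    apply Finset.sum_congr rfl
    intro j _
    have : ∀ i ∈ (Ones n x) ∩ Cls n k0 y j, y i = cc n k0 j := by
      intro i hi
      have := Finset.mem_of_mem_inter_right hi
      simpa [Cls] using this
    rw [Finset.sum_congr rfl this, Finset.sum_const, nsmul_eq_mul]
  -- ∑ y_i^2
  have hy2 : (∑ i, y i ^ 2) = ∑ j ∈ Icc 1 l, (k j : ℝ) * cc n k0 j ^ 2 := by
    have huniv : (Finset.univ : Finset (Fin n)) = (Icc 1 l).biUnion (Cls n k0 y) :=
      (cls_cover hsum hy).symm
    rw [show (∑ i, y i ^ 2) = ∑ i ∈ (Icc 1 l).biUnion (Cls n k0 y), y i ^ 2 by rw [← huniv]]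
    rw [Finset.sum_biUnion (fun j _ j' _ h => cls_disj h)]
    apply Finset.sum_congr rfl
    intro j hj
    have : ∀ i ∈ Cls n k0 y j, y i ^ 2 = cc n k0 j ^ 2 := by
      intro i hi; rw [show y i = cc n k0 j by simpa [Cls] using hi]
    rw [Finset.sum_congr rfl this, Finset.sum_const, nsmul_eq_mul, cls_card hy j hj]
  -- linear algebra on the coefficient sum
  have hb : ∑ j ∈ Icc 1 l, (((Ones n x) ∩ Cls n k0 y j).card : ℝ) * cc n k0 j
      = cc n k0 1 * m
        - ((∑ j ∈ Icc 1 l, (j - 1) * ((Ones n x) ∩ Cls n k0 y j).card : ℕ) : ℝ) := by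
    have e1 : ∀ j ∈ Icc 1 l, (((Ones n x) ∩ Cls n k0 y j).card : ℝ) * cc n k0 j
        = cc n k0 1 * (((Ones n x) ∩ Cls n k0 y j).card : ℝ)
          - ((j : ℝ) - 1) * (((Ones n x) ∩ Cls n k0 y j).card : ℝ) := by
      intro j hj
      unfold cc
      ring
    rw [Finset.sum_congr rfl e1, Finset.sum_sub_distrib, ← Finset.mul_sum]
    have e2 : (∑ j ∈ Icc 1 l, (((Ones n x) ∩ Cls n k0 y j).card : ℝ)) = (m : ℝ) := by
      rw [← Nat.cast_sum, inter_card_sum hsum hx hy]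
    have e3 : ((∑ j ∈ Icc 1 l, (j - 1) * ((Ones n x) ∩ Cls n k0 y j).card : ℕ) : ℝ)
        = ∑ j ∈ Icc 1 l, ((j : ℝ) - 1) * (((Ones n x) ∩ Cls n k0 y j).card : ℝ) := by
      rw [Nat.cast_sum]
      apply Finset.sum_congr rfl
      intro j hj
      simp only [mem_Icc] at hj
      rw [Nat.cast_mul, Nat.cast_sub hj.1]
      norm_num
    rw [e2, e3]
  rw [hd, hsplit, hx2, hxy, hy2, hb]
  ring

lemma attain {n m l : ℕ} {k0 : ℤ} {k : ℕ → ℕ} (hmn : m ≤ n)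
    (hsum : (∑ j ∈ Icc 1 l, k j) = n)
    {y : EuclideanSpace ℝ (Fin n)} (hy : y ∈ XSet n l k0 k) :
    ∃ x ∈ JohnsonRep n m, dist x y ^ 2 = m + (∑ j ∈ Icc 1 l, (k j : ℝ) * cc n k0 j ^ 2)
      - 2 * cc n k0 1 * m
      + 2 * ((∑ t ∈ Icc 2 l, min m (∑ j ∈ Icc t l, k j) : ℕ) : ℝ) := by
  classical
  set a : ℕ → ℕ := fun j => min m (∑ i ∈ Icc j l, k i) - min m (∑ i ∈ Icc (j+1) l, k i)
    with ha
  have hak : ∀ j, j ≤ l → a j ≤ k j := by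
    intro j hj
    have := Asucc k l j hj
    simp only [ha]
    omega
  set S : ℕ → Finset (Fin n) := fun j =>
    if h : a j ≤ (Cls n k0 y j).card then (Finset.exists_subset_card_eq h).choose else ∅
    with hSdef
  have hS1 : ∀ j, S j ⊆ Cls n k0 y j := by
    intro j
    simp only [hSdef]
    split
    · exact (Finset.exists_subset_card_eq (by assumption)).choose_spec.1
    · exact Finset.empty_subset _
  have hS2 : ∀ j ∈ Icc 1 l, (S j).card = a j := by
    intro j hj
    have hle : a j ≤ (Cls n k0 y j).card := by
      rw [cls_card hy j hj]
      exact hak j (Finset.mem_Icc.1 hj).2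
    simp only [hSdef]
    rw [dif_pos hle]
    exact (Finset.exists_subset_card_eq hle).choose_spec.2
  set Ax : Finset (Fin n) := (Icc 1 l).biUnion S with hAxdef
  have hdisj : ∀ j ∈ Icc 1 l, ∀ j' ∈ Icc 1 l, j ≠ j' → Disjoint (S j) (S j') :=
    fun j _ j' _ h => Disjoint.mono (hS1 j) (hS1 j') (cls_disj h)
  have hAxcard : Ax.card = m := by
    rw [hAxdef, Finset.card_biUnion hdisj, Finset.sum_congr rfl hS2,
      telescope m l k l 1 (by omega), hsum]
    exact min_eq_left hmn
  set x : EuclideanSpace ℝ (Fin n) := WithLp.toLp 2 (fun i => if i ∈ Ax then (1:ℝ) else 0) with hxdef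
  have hxJ : x ∈ JohnsonRep n m := by
    constructor
    · intro i
      by_cases h : i ∈ Ax
      · right; simp [hxdef, h]
      · left; simp [hxdef, h]
    · rw [show Set.ofPred (fun i : Fin n => x i = 1) = ↑Ax by
        ext i; by_cases h : i ∈ Ax <;> simp [hxdef, h]]
      rw [Set.ncard_coe_finset, hAxcard]
  have hOnes : Ones n x = Ax := by
    ext i; by_cases h : i ∈ Ax <;> simp [Ones, hxdef, h]
  have hinter : ∀ j ∈ Icc 1 l, Ax ∩ Cls n k0 y j = S j := by
    intro j hj
    ext i
    simp only [Finset.mem_inter, hAxdef, Finset.mem_biUnion]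
    constructor
    · rintro ⟨⟨j', hj', hij'⟩, hiC⟩
      rcases eq_or_ne j' j with rfl | hne
      · exact hij'
      · exact absurd hiC (Finset.disjoint_left.1 (cls_disj hne) (hS1 j' hij'))
    · intro hi
      exact ⟨⟨j, hj, hi⟩, hS1 j hi⟩
  refine ⟨x, hxJ, ?_⟩
  rw [dist_sq_eq hsum hxJ hy]
  have hkey : ∑ j ∈ Icc 1 l, (j - 1) * ((Ones n x) ∩ Cls n k0 y j).card
      = ∑ t ∈ Icc 2 l, min m (∑ j ∈ Icc t l, k j) := by
    rw [hOnes, Finset.sum_congr rfl (fun j hj => by rw [hinter j hj, hS2 j hj])]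
    exact eq_B l m k
  rw [hkey]

lemma MX_formula {n m l : ℕ} {k0 : ℤ} {k : ℕ → ℕ} (hmn : m ≤ n)
    (hsum : (∑ j ∈ Finset.Icc 1 l, k j) = n) {MX : ℝ}
    (hMX : IsGreatest {d : ℝ | ∃ x ∈ JohnsonRep n m, ∃ y ∈ XSet n l k0 k, d = dist x y ^ 2} MX) :
    MX = m + (∑ j ∈ Icc 1 l, (k j : ℝ) * cc n k0 j ^ 2) - 2 * cc n k0 1 * m
      + 2 * ((∑ t ∈ Icc 2 l, min m (∑ j ∈ Icc t l, k j) : ℕ) : ℝ) := by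
  obtain ⟨x0, hx0, y, hy, hMXeq⟩ := hMX.1
  obtain ⟨x1, hx1, hx1d⟩ := attain hmn hsum hy
  have hub : dist x1 y ^ 2 ≤ MX := hMX.2 ⟨x1, hx1, y, hy, rfl⟩
  rw [hx1d] at hub
  rw [dist_sq_eq hsum hx0 hy] at hMXeq
  have hb := bound_gen l m k (fun j => ((Ones n x0) ∩ Cls n k0 y j).card)
    (fun j hj => le_trans (Finset.card_le_card Finset.inter_subset_right)
      (le_of_eq (cls_card hy j hj)))
    (inter_card_sum hsum hx0 hy)
  have hbR : ((∑ j ∈ Icc 1 l, (j - 1) * ((Ones n x0) ∩ Cls n k0 y j).card : ℕ) : ℝ)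
      ≤ ((∑ t ∈ Icc 2 l, min m (∑ j ∈ Icc t l, k j) : ℕ) : ℝ) := Nat.cast_le.2 hb
  linarith

theorem MX_descent (n m l : ℕ) (hm : 1 ≤ m) (hn : 2 * m ≤ n)
    (hl : 3 ≤ l) (hlm : l ≤ m) (k0 : ℤ) (k : ℕ → ℕ)
    (hsum : (∑ j ∈ Finset.Icc 1 l, k j) = n)
    (hwsum : (∑ j ∈ Finset.Icc 1 l, (j : ℤ) * (k j : ℤ)) = 2 * n - k0 - m)
    (hk1 : 1 ≤ k 1) (hkl : 1 ≤ k l)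
    (k' : ℕ → ℕ)
    (hk'1 : k' 1 = k 1 - 1) (hk'l : k' l = k l - 1)
    (hcase3 : l = 3 → k' 2 = k 2 + 2)
    (hcase : 3 < l → k' 2 = k 2 + 1 ∧ k' (l - 1) = k (l - 1) + 1 ∧
      ∀ j, 3 ≤ j → j ≤ l - 2 → k' j = k j)
    (MX MX' : ℝ)
    (hMX : IsGreatest
      {d : ℝ | ∃ x ∈ JohnsonRep n m, ∃ y ∈ XSet n l k0 k, d = dist x y ^ 2} MX)
    (hMX' : IsGreatest
      {d : ℝ | ∃ x ∈ JohnsonRep n m, ∃ y ∈ XSet n l k0 k', d = dist x y ^ 2} MX') :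
    (∑ j ∈ Finset.Icc 1 l, k' j) = n ∧
    (∑ j ∈ Finset.Icc 1 l, (j : ℤ) * (k' j : ℤ)) = 2 * n - k0 - m ∧
    (∃ t : ℤ, Even t ∧ 0 < t ∧ MX - MX' = (t : ℝ)) ∧
    MX' < MX ∧
    ((∃ t : ℤ, Even t ∧ MX = (t : ℝ)) → (∃ t : ℤ, Even t ∧ MX' = (t : ℝ))) := by
  have hmn : m ≤ n := by omega
  have hl1 : 1 ≤ l := by omega
  -- master pointwise description of k'
  have hmaster : ∀ j ∈ Finset.Icc 1 l, (k' j : ℤ) = (k j : ℤ) +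
      ((if j = 2 then (1:ℤ) else 0) + (if j = l - 1 then (1:ℤ) else 0)
        + (if j = 1 then (-1:ℤ) else 0) + (if j = l then (-1:ℤ) else 0)) := by
    intro j hj
    simp only [Finset.mem_Icc] at hj
    rcases eq_or_lt_of_le hl with h3 | h4
    · have h3 : l = 3 := h3.symm
      subst h3
      have h2 := hcase3 rfl
      obtain ⟨hj1, hj2⟩ := hj
      interval_cases j
      · norm_num [hk'1]; omega
      · norm_num [h2]
      · norm_num [hk'l]; omega
    · obtain ⟨h2, hlm1, hmid⟩ := hcase h4
      by_cases e1 : j = 1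
      · subst e1
        rw [if_neg (by omega), if_neg (by omega), if_pos rfl, if_neg (by omega), hk'1]
        omega
      by_cases e2 : j = 2
      · subst e2
        rw [if_pos rfl, if_neg (by omega), if_neg (by omega), if_neg (by omega), h2]
        omega
      by_cases el1 : j = l - 1
      · subst el1
        rw [if_neg (by omega), if_pos rfl, if_neg (by omega), if_neg (by omega), hlm1]
        omega
      by_cases el : j = l
      · subst el
        rw [if_neg (by omega), if_neg (by omega), if_neg (by omega), if_pos rfl, hk'l]
        omega
      · rw [if_neg e2, if_neg el1, if_neg e1, if_neg el, hmid j (by omega) (by omega)]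
        omega
  have hm1 : (1:ℕ) ∈ Icc 1 l := Finset.mem_Icc.2 ⟨le_rfl, by omega⟩
  have hm2 : (2:ℕ) ∈ Icc 1 l := Finset.mem_Icc.2 ⟨by omega, by omega⟩
  have hml1 : (l-1:ℕ) ∈ Icc 1 l := Finset.mem_Icc.2 ⟨by omega, by omega⟩
  have hml : (l:ℕ) ∈ Icc 1 l := Finset.mem_Icc.2 ⟨by omega, le_rfl⟩
  -- conclusion 1
  have hsum' : (∑ j ∈ Finset.Icc 1 l, k' j) = n := by
    have h1 : (∑ j ∈ Finset.Icc 1 l, (k' j : ℤ)) = (n : ℤ) := by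
      rw [Finset.sum_congr rfl hmaster]
      rw [Finset.sum_add_distrib, Finset.sum_add_distrib, Finset.sum_add_distrib,
        Finset.sum_add_distrib, Finset.sum_ite_eq', Finset.sum_ite_eq',
        Finset.sum_ite_eq', Finset.sum_ite_eq',
        if_pos hm2, if_pos hml1, if_pos hm1, if_pos hml]
      rw [show (∑ j ∈ Finset.Icc 1 l, (k j : ℤ)) = (n:ℤ) by exact_mod_cast congrArg (Nat.cast : ℕ → ℤ) hsum]
      ring
    exact_mod_cast h1
  -- conclusion 2
  have hwsum' : (∑ j ∈ Finset.Icc 1 l, (j : ℤ) * (k' j : ℤ)) = 2 * n - k0 - m := by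
    have h1 : ∀ j ∈ Finset.Icc 1 l, (j : ℤ) * (k' j : ℤ) = (j : ℤ) * (k j : ℤ) +
        ((if j = 2 then (j:ℤ) else 0) + (if j = l - 1 then (j:ℤ) else 0)
          + (if j = 1 then (-(j:ℤ)) else 0) + (if j = l then (-(j:ℤ)) else 0)) := by
      intro j hj
      rw [hmaster j hj]
      split_ifs <;> ring
    rw [Finset.sum_congr rfl h1]
    rw [Finset.sum_add_distrib, Finset.sum_add_distrib, Finset.sum_add_distrib,
      Finset.sum_add_distrib, Finset.sum_ite_eq', Finset.sum_ite_eq',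
      Finset.sum_ite_eq', Finset.sum_ite_eq',
      if_pos hm2, if_pos hml1, if_pos hm1, if_pos hml, hwsum]
    have : ((l - 1 : ℕ) : ℤ) = (l : ℤ) - 1 := by omega
    rw [this]
    ring
  -- suffix sums of k' versus k
  have hA'val : ∀ t ∈ Finset.Icc 2 l, ((∑ j ∈ Icc t l, k' j : ℕ) : ℤ)
      = ((∑ j ∈ Icc t l, k j : ℕ) : ℤ) + (if t = 2 then 1 else 0)
        + (if t = l then -1 else 0) := by
    intro t ht
    have ht' := Finset.mem_Icc.1 ht
    have hsub : Icc t l ⊆ Icc 1 l := Finset.Icc_subset_Icc (by omega) le_rfl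
    have h1 : (∑ j ∈ Icc t l, (k' j : ℤ)) = ∑ j ∈ Icc t l, ((k j : ℤ)
        + ((if j = 2 then (1:ℤ) else 0) + (if j = l - 1 then (1:ℤ) else 0)
          + (if j = 1 then (-1:ℤ) else 0) + (if j = l then (-1:ℤ) else 0))) :=
      Finset.sum_congr rfl (fun j hj => hmaster j (hsub hj))
    rw [Finset.sum_add_distrib, Finset.sum_add_distrib, Finset.sum_add_distrib,
      Finset.sum_add_distrib, Finset.sum_ite_eq', Finset.sum_ite_eq',
      Finset.sum_ite_eq', Finset.sum_ite_eq'] at h1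
    rw [Nat.cast_sum, Nat.cast_sum, h1]
    simp only [Finset.mem_Icc]
    split_ifs <;> omega
  have hA2 : (∑ j ∈ Icc 2 l, k' j) = (∑ j ∈ Icc 2 l, k j) + 1 := by
    have h1 := hA'val 2 (Finset.mem_Icc.2 ⟨le_rfl, by omega⟩)
    rw [if_pos rfl, if_neg (by omega)] at h1
    omega
  have hAlk : (∑ j ∈ Icc l l, k j) = k l := by rw [Finset.Icc_self, Finset.sum_singleton]
  have hAl' : (∑ j ∈ Icc l l, k' j) = (∑ j ∈ Icc l l, k j) - 1 ∧ 1 ≤ ∑ j ∈ Icc l l, k j := by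
    have h1 := hA'val l (Finset.mem_Icc.2 ⟨by omega, le_rfl⟩)
    rw [if_neg (by omega), if_pos rfl] at h1
    constructor <;> omega
  have hAmid : ∀ t ∈ Finset.Icc 2 l, t ≠ 2 → t ≠ l →
      (∑ j ∈ Icc t l, k' j) = ∑ j ∈ Icc t l, k j := by
    intro t ht h2 hle
    have h1 := hA'val t ht
    rw [if_neg h2, if_neg hle] at h1
    omega
  have hA2l : (∑ j ∈ Icc l l, k j) ≤ ∑ j ∈ Icc 2 l, k j :=
    Finset.sum_le_sum_of_subset (Finset.Icc_subset_Icc (by omega) le_rfl)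
  -- B' versus B
  have hBB : ((∑ t ∈ Icc 2 l, min m (∑ j ∈ Icc t l, k' j) : ℕ) : ℤ)
      = ((∑ t ∈ Icc 2 l, min m (∑ j ∈ Icc t l, k j) : ℕ) : ℤ)
        + (((min m ((∑ j ∈ Icc 2 l, k j) + 1) : ℕ) : ℤ) - ((min m (∑ j ∈ Icc 2 l, k j) : ℕ) : ℤ))
        + (((min m ((∑ j ∈ Icc l l, k j) - 1) : ℕ) : ℤ) - ((min m (∑ j ∈ Icc l l, k j) : ℕ) : ℤ)) := by
    have h1 : ∀ t ∈ Finset.Icc 2 l, ((min m (∑ j ∈ Icc t l, k' j) : ℕ) : ℤ)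
        = ((min m (∑ j ∈ Icc t l, k j) : ℕ) : ℤ)
          + ((if t = 2 then (((min m ((∑ j ∈ Icc 2 l, k j) + 1) : ℕ) : ℤ)
                - ((min m (∑ j ∈ Icc 2 l, k j) : ℕ) : ℤ)) else 0)
            + (if t = l then (((min m ((∑ j ∈ Icc l l, k j) - 1) : ℕ) : ℤ)
                - ((min m (∑ j ∈ Icc l l, k j) : ℕ) : ℤ)) else 0)) := by
      intro t ht
      by_cases e2 : t = 2
      · subst e2
        rw [if_pos rfl, if_neg (by omega), hA2]
        omega
      · by_cases el : t = l
        · subst el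
          rw [if_neg e2, if_pos rfl, hAl'.1]
          omega
        · rw [if_neg e2, if_neg el, hAmid t ht e2 el]
          omega
    rw [Nat.cast_sum, Nat.cast_sum, Finset.sum_congr rfl h1, Finset.sum_add_distrib,
      Finset.sum_add_distrib, Finset.sum_ite_eq', Finset.sum_ite_eq',
      if_pos (Finset.mem_Icc.2 ⟨le_rfl, by omega⟩), if_pos (Finset.mem_Icc.2 ⟨by omega, le_rfl⟩)]
    ring
  -- the quadratic part
  have hQ : (∑ j ∈ Icc 1 l, (k' j : ℝ) * cc n k0 j ^ 2)
      = (∑ j ∈ Icc 1 l, (k j : ℝ) * cc n k0 j ^ 2) - (2 * (l : ℝ) - 4) := by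
    have h1 : ∀ j ∈ Finset.Icc 1 l, (k' j : ℝ) * cc n k0 j ^ 2 = (k j : ℝ) * cc n k0 j ^ 2
        + ((if j = 2 then cc n k0 j ^ 2 else 0) + (if j = l - 1 then cc n k0 j ^ 2 else 0)
          + (if j = 1 then -(cc n k0 j ^ 2) else 0) + (if j = l then -(cc n k0 j ^ 2) else 0)) := by
      intro j hj
      have hmr : (k' j : ℝ) = (k j : ℝ) + ((if j = 2 then (1:ℝ) else 0)
          + (if j = l - 1 then (1:ℝ) else 0) + (if j = 1 then (-1:ℝ) else 0)
          + (if j = l then (-1:ℝ) else 0)) := by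
        have h2 := hmaster j hj
        split_ifs at h2 ⊢ <;> exact_mod_cast h2
      rw [hmr]
      split_ifs <;> ring
    rw [Finset.sum_congr rfl h1, Finset.sum_add_distrib, Finset.sum_add_distrib,
      Finset.sum_add_distrib, Finset.sum_add_distrib, Finset.sum_ite_eq', Finset.sum_ite_eq',
      Finset.sum_ite_eq', Finset.sum_ite_eq',
      if_pos hm2, if_pos hml1, if_pos hm1, if_pos hml]
    have hcc : cc n k0 2 ^ 2 + cc n k0 (l-1) ^ 2 + -(cc n k0 1 ^ 2) + -(cc n k0 l ^ 2)
        = -(2 * (l : ℝ) - 4) := by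
      unfold cc
      rw [Nat.cast_sub hl1]
      push_cast
      ring
    linarith [hcc]
  -- the two maxima
  have hMXf := MX_formula hmn hsum hMX
  have hMX'f := MX_formula hmn hsum' hMX'
  have hdiff : MX - MX' = ((2*(l:ℤ) - 4
      + 2*((∑ t ∈ Icc 2 l, min m (∑ j ∈ Icc t l, k j) : ℕ) : ℤ)
      - 2*((∑ t ∈ Icc 2 l, min m (∑ j ∈ Icc t l, k' j) : ℕ) : ℤ) : ℤ) : ℝ) := by
    rw [hMXf, hMX'f, hQ]
    push_cast
    ring
  have hpos : (0:ℤ) < 2*(l:ℤ) - 4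
      + 2*((∑ t ∈ Icc 2 l, min m (∑ j ∈ Icc t l, k j) : ℕ) : ℤ)
      - 2*((∑ t ∈ Icc 2 l, min m (∑ j ∈ Icc t l, k' j) : ℕ) : ℤ) := by
    omega
  have heven : Even (2*(l:ℤ) - 4
      + 2*((∑ t ∈ Icc 2 l, min m (∑ j ∈ Icc t l, k j) : ℕ) : ℤ)
      - 2*((∑ t ∈ Icc 2 l, min m (∑ j ∈ Icc t l, k' j) : ℕ) : ℤ)) :=
    ⟨(l:ℤ) - 2 + ((∑ t ∈ Icc 2 l, min m (∑ j ∈ Icc t l, k j) : ℕ) : ℤ)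
      - ((∑ t ∈ Icc 2 l, min m (∑ j ∈ Icc t l, k' j) : ℕ) : ℤ), by ring⟩
  have hposR : (0:ℝ) < ((2*(l:ℤ) - 4
      + 2*((∑ t ∈ Icc 2 l, min m (∑ j ∈ Icc t l, k j) : ℕ) : ℤ)
      - 2*((∑ t ∈ Icc 2 l, min m (∑ j ∈ Icc t l, k' j) : ℕ) : ℤ) : ℤ) : ℝ) := by
    exact_mod_cast hpos
  refine ⟨hsum', hwsum', ⟨_, heven, hpos, hdiff⟩, by linarith, ?_⟩
  rintro ⟨t0, ht0e, ht0⟩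
  refine ⟨t0 - (2*(l:ℤ) - 4
      + 2*((∑ t ∈ Icc 2 l, min m (∑ j ∈ Icc t l, k j) : ℕ) : ℤ)
      - 2*((∑ t ∈ Icc 2 l, min m (∑ j ∈ Icc t l, k' j) : ℕ) : ℤ)), ht0e.sub heven, ?_⟩
  push_cast
  push_cast at hdiff
  linarith
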